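/- Let q ≡ 3 (mod 4) be an odd prime power and let a₀, b₀ ∈ F_q be nonzero with b₀/a₀ = u⁴ for some nonzero u ∈ F_q. Set R₀ = ⟨(a₀,b₀,0)⟩ and K = H ∪ {R₀}. Then the point ⟨(0,0,1)⟩ is K-covered; in fact it lies on the line through the two distinct points R₀ and ⟨(1,u⁴,u²)⟩ ∈ H. -/

import Mathlib

noncomputable section

/-- Three points of PG(2,q) are collinear if they have linearly dependent representatives. -/
def Coll3 {F : Type*} [Field F] (P Q R : Projectivization F (Fin 3 → F)) : Prop :=
  ¬ LinearIndependent F ![P.rep, Q.rep, R.rep]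

/-- A point is `S`-covered if it lies on a line through two distinct points of `S`. -/
def PGCovered {F : Type*} [Field F] (S : Set (Projectivization F (Fin 3 → F)))
    (P : Projectivization F (Fin 3 → F)) : Prop :=
  ∃ Q ∈ S, ∃ R ∈ S, Q ≠ R ∧ Coll3 P Q R

/-- A point not in `S` is `S`-free if it is not `S`-covered. -/
def PGFree {F : Type*} [Field F] (S : Set (Projectivization F (Fin 3 → F)))
    (P : Projectivization F (Fin 3 → F)) : Prop :=
  P ∉ S ∧ ¬ PGCovered S P

lemma vec_ne_zero {F : Type*} [Field F] (v : Fin 3 → F) (i : Fin 3) (h : v i ≠ 0) : v ≠ 0 :=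
  fun hv => h (by simp [hv])

/-- The set `H = {⟨(1,s⁴,s²)⟩ : s ∈ F}` of points of PG(2,q). -/
def HSet (F : Type*) [Field F] : Set (Projectivization F (Fin 3 → F)) :=
  {P | ∃ s : F, P = Projectivization.mk F ![1, s ^ 4, s ^ 2] (vec_ne_zero _ 0 (by simp))}

/-- The conic `C : XY = Z²` in PG(2,q).  (Membership does not depend on the choice of
representative since the equation is homogeneous.) -/
def conicC (F : Type*) [Field F] : Set (Projectivization F (Fin 3 → F)) :=
  {P | P.rep 0 * P.rep 1 = P.rep 2 ^ 2}

/-- An arc: a set of points no three of which are collinear. -/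
def IsPGArc {F : Type*} [Field F] (S : Set (Projectivization F (Fin 3 → F))) : Prop :=
  ∀ P ∈ S, ∀ Q ∈ S, ∀ R ∈ S, P ≠ Q → P ≠ R → Q ≠ R → ¬ Coll3 P Q R

/-- A complete arc: an arc which cannot be extended to a larger arc. -/
def IsCompletePGArc {F : Type*} [Field F] (S : Set (Projectivization F (Fin 3 → F))) : Prop :=
  IsPGArc S ∧ ∀ P ∉ S, ¬ IsPGArc (insert P S)

lemma rep_scalar {F : Type*} [Field F] (v : Fin 3 → F) (hv : v ≠ 0) :
    ∃ c : Fˣ, (Projectivization.mk F v hv).rep = c • v := by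
  have h := Projectivization.mk_rep (Projectivization.mk F v hv)
  rw [Projectivization.mk_eq_mk_iff] at h
  obtain ⟨a, ha⟩ := h
  exact ⟨a, ha.symm⟩

lemma dep3 {F : Type*} [Field F] (a₀ b₀ u : F) (ha₀ : a₀ ≠ 0) (hu : u ≠ 0)
    (hb : b₀ = a₀ * u ^ 4) (c₁ c₂ c₃ : Fˣ) (P1 P2 P3 : Fin 3 → F)
    (h1 : P1 = c₁ • ![0,0,1])
    (h2 : P2 = c₂ • ![a₀,b₀,0])
    (h3 : P3 = c₃ • ![1,u^4,u^2]) :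
    ¬ LinearIndependent F ![P1, P2, P3] := by
  rw [Fintype.not_linearIndependent_iff]
  refine ⟨![a₀ * u ^ 2 * (c₁⁻¹ : Fˣ), (c₂⁻¹ : Fˣ), -a₀ * (c₃⁻¹ : Fˣ)], ?_, 0, ?_⟩
  · funext i
    fin_cases i <;>
      · simp only [h1, h2, h3, hb, Fin.sum_univ_three, Matrix.cons_val_zero,
          Matrix.cons_val_one, Matrix.head_cons, Pi.smul_apply, Pi.add_apply,
          Units.smul_def, smul_eq_mul, Matrix.cons_val_two, Matrix.tail_cons,
          Matrix.cons_val', Matrix.empty_val', Matrix.cons_val_fin_one, Pi.zero_apply, Fin.zero_eta, Fin.mk_one, Fin.reduceFinMk,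
          Units.val_inv_eq_inv_val]
        field_simp
        try ring
  · simp only [Matrix.cons_val_zero]
    intro h
    rcases mul_eq_zero.1 h with h' | h'
    · rcases mul_eq_zero.1 h' with h'' | h''
      · exact ha₀ h''
      · exact pow_ne_zero 2 hu h''
    · exact (c₁⁻¹ : Fˣ).ne_zero h'

/-- for `q ≡ 3 (mod 4)` and `b₀/a₀ = u⁴`, the point `⟨(0,0,1)⟩` is `K`-covered,
lying on the line through the two distinct points `R₀` and `⟨(1,u⁴,u²)⟩ ∈ H`. -/
theorem stmt6 (F : Type*) [Field F] [Fintype F] (q : ℕ) (hcard : Fintype.card F = q)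
    (hodd : Odd q) (hq3 : q % 4 = 3) (a₀ b₀ : F) (ha₀ : a₀ ≠ 0) (hb₀ : b₀ ≠ 0)
    (u : F) (hu : u ≠ 0) (hquart : b₀ / a₀ = u ^ 4) :
    PGCovered (HSet F ∪
        {Projectivization.mk F ![a₀, b₀, 0] (vec_ne_zero _ 0 (by simpa using ha₀))})
      (Projectivization.mk F ![0, 0, 1] (vec_ne_zero _ 2 (by simp))) ∧
    Projectivization.mk F ![a₀, b₀, 0] (vec_ne_zero _ 0 (by simpa using ha₀)) ≠
      Projectivization.mk F ![1, u ^ 4, u ^ 2] (vec_ne_zero _ 0 (by simp)) ∧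
    Projectivization.mk F ![1, u ^ 4, u ^ 2] (vec_ne_zero _ 0 (by simp)) ∈ HSet F ∧
    Coll3 (Projectivization.mk F ![0, 0, 1] (vec_ne_zero _ 2 (by simp)))
      (Projectivization.mk F ![a₀, b₀, 0] (vec_ne_zero _ 0 (by simpa using ha₀)))
      (Projectivization.mk F ![1, u ^ 4, u ^ 2] (vec_ne_zero _ 0 (by simp))) := by

  have hb : b₀ = a₀ * u ^ 4 := by
    field_simp at hquart
    linear_combination hquart
  have hmem : Projectivization.mk F ![1, u ^ 4, u ^ 2] (vec_ne_zero _ 0 (by simp)) ∈ HSet F :=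
    ⟨u, rfl⟩
  have hne : Projectivization.mk F ![a₀, b₀, 0] (vec_ne_zero _ 0 (by simpa using ha₀)) ≠
      Projectivization.mk F ![1, u ^ 4, u ^ 2] (vec_ne_zero _ 0 (by simp)) := by
    intro h
    rw [Projectivization.mk_eq_mk_iff] at h
    obtain ⟨a, ha⟩ := h
    have h2 := congrFun ha 2
    simp [Units.smul_def, hu, a.ne_zero] at h2
  have hcoll : Coll3 (Projectivization.mk F ![0, 0, 1] (vec_ne_zero _ 2 (by simp)))
      (Projectivization.mk F ![a₀, b₀, 0] (vec_ne_zero _ 0 (by simpa using ha₀)))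
      (Projectivization.mk F ![1, u ^ 4, u ^ 2] (vec_ne_zero _ 0 (by simp))) := by
    obtain ⟨c₁, hc₁⟩ := rep_scalar (F := F) ![0, 0, 1] (vec_ne_zero _ 2 (by simp))
    obtain ⟨c₂, hc₂⟩ := rep_scalar (F := F) ![a₀, b₀, 0] (vec_ne_zero _ 0 (by simpa using ha₀))
    obtain ⟨c₃, hc₃⟩ := rep_scalar (F := F) ![1, u ^ 4, u ^ 2] (vec_ne_zero _ 0 (by simp))
    exact dep3 a₀ b₀ u ha₀ hu hb c₁ c₂ c₃ _ _ _ hc₁ hc₂ hc₃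
  exact ⟨⟨_, Or.inr rfl, _, Or.inl hmem, hne, hcoll⟩, hne, hmem, hcoll⟩
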